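/- A topological space X is metrizable if and only if there exists a set V and an embedding of X into l¹(V) such that every element of the image has l¹-norm equal to 1. -/

import Mathlib

noncomputable section
open Set Topology TopologicalSpace

/-- `𝒰` is an open cover of `X`. -/
def IsOpenCover {X : Type} [TopologicalSpace X] (𝒰 : Set (Set X)) : Prop :=
  (∀ U ∈ 𝒰, IsOpen U) ∧ ⋃₀ 𝒰 = univ

/-- Star of a point with respect to a family of sets. -/
def ptStar {X : Type} (x : X) (𝒰 : Set (Set X)) : Set X := ⋃₀ {U | U ∈ 𝒰 ∧ x ∈ U}

/-- Star of a set with respect to a family of sets. -/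
def setStar {X : Type} (A : Set X) (𝒰 : Set (Set X)) : Set X :=
  ⋃₀ {U | U ∈ 𝒰 ∧ (U ∩ A).Nonempty}

/-- `𝒱` star-refines `𝒰`. -/
def StarRefines {X : Type} (𝒱 𝒰 : Set (Set X)) : Prop :=
  ∀ x : X, ∃ U ∈ 𝒰, ptStar x 𝒱 ⊆ U

/-- A continuous partition of unity viewed as a map into `l¹(S)` with image in `Δ(S)`. -/
def IsPU {X S : Type} [TopologicalSpace X] (f : X → lp (fun _ : S => ℝ) 1) : Prop :=
  Continuous f ∧ ∀ x : X, (∀ s : S, 0 ≤ f x s) ∧ HasSum (fun s => f x s) 1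

/-- The partition of unity `f` is `𝒰`-small: each carrier lies in a member of `𝒰`. -/
def IsUSmall {X S : Type} [TopologicalSpace X] (𝒰 : Set (Set X))
    (f : X → lp (fun _ : S => ℝ) 1) : Prop :=
  ∀ s : S, ∃ U ∈ 𝒰, {x : X | f x s ≠ 0} ⊆ U

/-- There exists a `𝒰`-small partition of unity on `X`. -/
def ExistsUSmallPU {X : Type} [TopologicalSpace X] (𝒰 : Set (Set X)) : Prop :=
  ∃ (S : Type) (f : X → lp (fun _ : S => ℝ) 1), IsPU f ∧ IsUSmall 𝒰 f

/-- An indexed family of sets is discrete. -/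
def DiscreteFam {X S : Type} [TopologicalSpace X] (A : S → Set X) : Prop :=
  ∀ x : X, ∃ N ∈ nhds x, {s : S | (A s ∩ N).Nonempty}.Subsingleton

/-- A family of sets (as a set of sets) is discrete. -/
def DiscreteSetFam {X : Type} [TopologicalSpace X] (𝒜 : Set (Set X)) : Prop :=
  ∀ x : X, ∃ N ∈ nhds x, {A | A ∈ 𝒜 ∧ (A ∩ N).Nonempty}.Subsingleton

/-- `𝒰` has a σ-discrete closed refinement. -/
def HasSigmaDiscreteClosedRefinement {X : Type} [TopologicalSpace X]
    (𝒰 : Set (Set X)) : Prop :=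
  ∃ D : ℕ → Set (Set X), (∀ n, DiscreteSetFam (D n)) ∧
    (∀ n, ∀ F ∈ D n, IsClosed F) ∧
    (∀ n, ∀ F ∈ D n, ∃ U ∈ 𝒰, F ⊆ U) ∧
    ⋃₀ (⋃ n, D n) = univ

/-- `X` is collectionwise normal. -/
def CwNormal (X : Type) [TopologicalSpace X] : Prop :=
  ∀ (S : Type) (A : S → Set X), (∀ s, IsClosed (A s)) → DiscreteFam A →
    ∃ V : S → Set X, (∀ s, IsOpen (V s)) ∧ (∀ s, A s ⊆ V s) ∧ DiscreteFam V

theorem aux_embed (X : Type) [MetricSpace X] :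
    ∃ (V : Type) (f : X → lp (fun _ : V => ℝ) 1),
      IsEmbedding f ∧ ∀ x : X, ‖f x‖ = 1 := by
  classical
  have hcov : ∀ n : ℕ, ∃ ρ : PartitionOfUnity X X univ,
      ρ.IsSubordinate fun c => Metric.ball c ((2:ℝ)⁻¹ ^ n) := by
    intro n
    refine PartitionOfUnity.exists_isSubordinate isClosed_univ _
      (fun c => Metric.isOpen_ball) ?_
    intro x _
    exact mem_iUnion.2 ⟨x, Metric.mem_ball_self (by positivity)⟩
  choose ρ hρ using hcov
  set w : ℕ → ℝ := fun n => (2:ℝ)⁻¹ ^ (n + 1) with hw_def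
  have hw_pos : ∀ n, 0 < w n := fun n => by positivity
  have hw_sum : HasSum w 1 := by
    have h := (hasSum_geometric_of_lt_one (by norm_num : (0:ℝ) ≤ 2⁻¹)
      (by norm_num : (2:ℝ)⁻¹ < 1)).mul_left (2:ℝ)⁻¹
    have h2 : (fun n : ℕ => (2:ℝ)⁻¹ * (2:ℝ)⁻¹ ^ n) = w := by
      funext n; rw [hw_def]; ring
    have h3 : (2:ℝ)⁻¹ * (1 - 2⁻¹)⁻¹ = 1 := by norm_num
    rwa [h2, h3] at h
  have hρ_sum : ∀ (n : ℕ) (x : X), HasSum (fun c => ρ n c x) 1 := by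
    intro n x
    have h0 : ∀ c ∉ (ρ n).finsupport x, ρ n c x = 0 := by
      intro c hc
      by_contra h
      exact hc (((ρ n).mem_finsupport x).2 h)
    have h : HasSum (fun c => ρ n c x) _ := hasSum_sum_of_ne_finset_zero h0
    rwa [(ρ n).sum_finsupport (mem_univ x)] at h
  set g : X → ℕ × X → ℝ := fun x nc => w nc.1 * ρ nc.1 nc.2 x with hg_def
  have hg_nonneg : ∀ x nc, 0 ≤ g x nc := fun x nc =>
    mul_nonneg (hw_pos _).le ((ρ _).nonneg _ x)
  have hg_fib : ∀ (n : ℕ) (x : X), HasSum (fun c => g x (n, c)) (w n) := by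
    intro n x
    simpa using (hρ_sum n x).mul_left (w n)
  have hg_summable : ∀ x, Summable (g x) := by
    intro x
    rw [summable_prod_of_nonneg (fun nc => hg_nonneg x nc)]
    refine ⟨fun n => (hg_fib n x).summable, ?_⟩
    have : (fun n => ∑' c, g x (n, c)) = w := funext fun n => (hg_fib n x).tsum_eq
    rw [this]
    exact hw_sum.summable
  have hg_hasSum : ∀ x, HasSum (g x) 1 := by
    intro x
    have h2 : HasSum w (∑' nc, g x nc) :=
      (hg_summable x).hasSum.prod_fiberwise fun n => hg_fib n x
    have h3 : ∑' nc, g x nc = 1 := (hw_sum.unique h2).symm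
    exact h3 ▸ (hg_summable x).hasSum
  have hg_mem : ∀ x, Memℓp (g x) 1 := by
    intro x
    apply memℓp_gen
    have h : (fun nc => ‖g x nc‖ ^ (ENNReal.toReal 1)) = g x := by
      funext nc
      simp [Real.norm_eq_abs, abs_of_nonneg (hg_nonneg x nc)]
    rw [h]
    exact hg_summable x
  set F : X → lp (fun _ : ℕ × X => ℝ) 1 := fun x => ⟨g x, hg_mem x⟩ with hF_def
  have hF_apply : ∀ x nc, F x nc = g x nc := fun x nc => rfl
  have hnorm_hasSum : ∀ f : lp (fun _ : ℕ × X => ℝ) 1,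
      HasSum (fun nc => ‖f nc‖) ‖f‖ := by
    intro f
    have h := lp.hasSum_norm (by norm_num : 0 < (ENNReal.toReal 1)) f
    simpa using h
  have hF_norm : ∀ x, ‖F x‖ = 1 := by
    intro x
    have h1 : HasSum (fun nc => ‖F x nc‖) ‖F x‖ := hnorm_hasSum _
    have h2 : (fun nc => ‖F x nc‖) = g x := funext fun nc => by
      simp [hF_apply, Real.norm_eq_abs, abs_of_nonneg (hg_nonneg x nc)]
    rw [h2] at h1
    exact h1.unique (hg_hasSum x)
  have hcoord : ∀ (x y : X) (nc : ℕ × X), |g x nc - g y nc| ≤ ‖F x - F y‖ := by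
    intro x y nc
    have h := lp.norm_apply_le_norm one_ne_zero (F x - F y) nc
    simpa [lp.coeFn_sub, hF_apply, Real.norm_eq_abs] using h
  -- level-n pieces
  set gn : ℕ → X → ℕ × X → ℝ := fun n x nc => if nc.1 = n then g x nc else 0 with hgn_def
  have hgn_nonneg : ∀ n x nc, 0 ≤ gn n x nc := by
    intro n x nc
    simp only [hgn_def]
    split
    · exact hg_nonneg x nc
    · exact le_rfl
  have hgn_le : ∀ n x nc, gn n x nc ≤ g x nc := by
    intro n x nc
    simp only [hgn_def]
    split
    · exact le_rfl
    · exact hg_nonneg x nc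
  have hgn_summable : ∀ n x, Summable (gn n x) :=
    fun n x => Summable.of_nonneg_of_le (hgn_nonneg n x) (hgn_le n x) (hg_summable x)
  have hgn_mem : ∀ n x, Memℓp (gn n x) 1 := by
    intro n x
    apply memℓp_gen
    have h : (fun nc => ‖gn n x nc‖ ^ (ENNReal.toReal 1)) = gn n x := by
      funext nc
      simp [Real.norm_eq_abs, abs_of_nonneg (hgn_nonneg n x nc)]
    rw [h]
    exact hgn_summable n x
  set Fn : ℕ → X → lp (fun _ : ℕ × X => ℝ) 1 := fun n x => ⟨gn n x, hgn_mem n x⟩ with hFn_def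
  have hFn_apply : ∀ n x nc, Fn n x nc = gn n x nc := fun n x nc => rfl
  have hFn_norm : ∀ n x, ‖Fn n x‖ = w n := by
    intro n x
    refine (hnorm_hasSum (Fn n x)).unique ?_
    have hinj : Function.Injective (fun c : X => ((n, c) : ℕ × X)) := by
      intro a b h
      exact congrArg Prod.snd h
    have hzero : ∀ nc ∉ Set.range (fun c : X => ((n, c) : ℕ × X)), ‖Fn n x nc‖ = 0 := by
      rintro ⟨m, c⟩ h
      have hm : m ≠ n := by
        rintro rfl
        exact h ⟨c, rfl⟩
      simp [hFn_apply, hgn_def, hm]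
    rw [← hinj.hasSum_iff hzero]
    have h : ((fun nc => ‖Fn n x nc‖) ∘ fun c : X => ((n, c) : ℕ × X))
        = fun c => g x (n, c) := by
      funext c
      simp [Function.comp, hFn_apply, hgn_def, Real.norm_eq_abs,
        abs_of_nonneg (hg_nonneg x (n, c))]
    rw [h]
    exact hg_fib n x
  -- continuity of single coordinate inclusion
  have hsingle_sub : ∀ (i : ℕ × X) (a b : ℝ),
      lp.single (E := fun _ : ℕ × X => ℝ) 1 i a - lp.single 1 i b = lp.single 1 i (a - b) := by
    intro i a b
    refine lp.ext (funext fun j => ?_)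
    by_cases h : j = i
    · subst h
      simp [lp.coeFn_sub, lp.single_apply_self]
    · simp [lp.coeFn_sub, lp.single_apply_ne _ _ _ h]
  have hsingle_cont : ∀ i : ℕ × X, Continuous fun a : ℝ => lp.single (E := fun _ : ℕ × X => ℝ) 1 i a := by
    intro i
    apply Isometry.continuous
    apply Isometry.of_dist_eq
    intro a b
    rw [dist_eq_norm, dist_eq_norm, hsingle_sub]
    exact lp.norm_single (E := fun _ : ℕ × X => ℝ) (by norm_num) i (a - b)
  have hFn_cont : ∀ n, Continuous (Fn n) := by
    intro n
    rw [continuous_iff_continuousAt]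
    intro x₀
    obtain ⟨I, hI⟩ := (ρ n).exists_finset_nhds x₀
    have hcont : ContinuousAt
        (fun x => ∑ c ∈ I, lp.single (E := fun _ : ℕ × X => ℝ) 1 (n, c) (w n * ρ n c x)) x₀ := by
      refine (continuous_finset_sum I fun c _ => ?_).continuousAt
      exact (hsingle_cont (n, c)).comp (continuous_const.mul ((ρ n) c).continuous)
    refine hcont.congr ?_
    filter_upwards [hI] with x hx
    refine (lp.ext (funext fun nc => ?_)).symm
    rw [lp.coeFn_sum, Finset.sum_apply]
    obtain ⟨m, c'⟩ := nc
    by_cases hm : m = n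
    · subst hm
      by_cases hc : c' ∈ I
      · rw [Finset.sum_eq_single_of_mem c' hc]
        · simp [hFn_apply, hgn_def, hg_def, lp.single_apply_self]
        · intro b _ hb
          exact lp.single_apply_ne _ _ _ (by simp [Prod.ext_iff, hb.symm])
      · have h0 : ρ m c' x = 0 := by
          by_contra h
          exact hc (hx.2 h)
        rw [Finset.sum_eq_zero]
        · simp [hFn_apply, hgn_def, hg_def, h0]
        · intro b hb
          refine lp.single_apply_ne _ _ _ ?_
          simp only [Prod.mk.injEq, ne_eq, not_and]
          intro _
          rintro rfl
          exact hc hb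
    · rw [Finset.sum_eq_zero]
      · simp [hFn_apply, hgn_def, hm]
      · intro b _
        exact lp.single_apply_ne _ _ _ (by simp [Prod.ext_iff, hm])
  have hFn_summable : ∀ x, Summable fun n => Fn n x := by
    intro x
    apply Summable.of_norm
    have h : (fun n => ‖Fn n x‖) = w := funext fun n => hFn_norm n x
    rw [h]
    exact hw_sum.summable
  have hF_hasSum : ∀ x, HasSum (fun n => Fn n x) (F x) := by
    intro x
    have hs := (hFn_summable x).hasSum
    suffices h : (∑' n, Fn n x) = F x by rwa [h] at hs
    refine lp.ext (funext fun nc => ?_)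
    have hev : Continuous (fun f : lp (fun _ : ℕ × X => ℝ) 1 => f nc) := by
      refine LipschitzWith.continuous (K := 1) (LipschitzWith.of_dist_le_mul fun f h => ?_)
      simp only [dist_eq_norm, NNReal.coe_one, one_mul]
      simpa [lp.coeFn_sub] using lp.norm_apply_le_norm one_ne_zero (f - h) nc
    have hmap := hs.map (AddMonoidHom.mk' (fun f : lp (fun _ : ℕ × X => ℝ) 1 => f nc)
      (fun f h => by simp [lp.coeFn_add])) hev
    have hval : HasSum (fun n => Fn n x nc) (g x nc) := by
      have h : (fun n => Fn n x nc) = fun n => if n = nc.1 then g x nc else 0 := by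
        funext n
        rw [hFn_apply]
        simp only [hgn_def]
        by_cases h : nc.1 = n
        · rw [if_pos h, if_pos h.symm]
        · rw [if_neg h, if_neg (fun hh => h hh.symm)]
      rw [h]
      exact hasSum_ite_eq nc.1 (g x nc)
    exact hmap.unique hval
  have hF_cont : Continuous F := by
    have h : F = fun x => ∑' n, Fn n x := funext fun x => ((hF_hasSum x).tsum_eq).symm
    rw [h]
    refine continuous_tsum hFn_cont hw_sum.summable ?_
    intro n x
    rw [hFn_norm]
  -- key quantitative estimate
  have key : ∀ (n : ℕ) (x : X), ∃ δ > 0, ∀ y : X,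
      ‖F y - F x‖ < δ → dist y x < 2 * (2:ℝ)⁻¹ ^ n := by
    intro n x
    have hex : ∃ c, ρ n c x ≠ 0 := by
      by_contra h
      push_neg at h
      have hs := (ρ n).sum_finsupport (mem_univ x)
      rw [Finset.sum_eq_zero (fun c _ => h c)] at hs
      norm_num at hs
    obtain ⟨c, hc⟩ := hex
    have hcpos : 0 < ρ n c x := lt_of_le_of_ne ((ρ n).nonneg c x) (Ne.symm hc)
    refine ⟨w n * ρ n c x, mul_pos (hw_pos n) hcpos, fun y hy => ?_⟩
    have h1 : ρ n c y ≠ 0 := by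
      intro h0
      have h2 : |g y (n, c) - g x (n, c)| ≤ ‖F y - F x‖ := hcoord y x (n, c)
      have h3 : g y (n, c) = 0 := by
        simp only [hg_def, h0, mul_zero]
      have h4 : g x (n, c) = w n * ρ n c x := rfl
      rw [h3, h4, zero_sub, abs_neg,
        abs_of_nonneg (mul_pos (hw_pos n) hcpos).le] at h2
      exact absurd (lt_of_le_of_lt h2 hy) (lt_irrefl _)
    have hy' : y ∈ Metric.ball c ((2:ℝ)⁻¹ ^ n) :=
      hρ n c (subset_closure (Function.mem_support.2 h1))
    have hx' : x ∈ Metric.ball c ((2:ℝ)⁻¹ ^ n) :=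
      hρ n c (subset_closure (Function.mem_support.2 hc))
    have t := dist_triangle_right y x c
    rw [Metric.mem_ball] at hy' hx'
    linarith
  -- injectivity
  have hinj : Function.Injective F := by
    intro x y hxy
    by_contra hne
    have hd : 0 < dist y x := dist_pos.2 fun h => hne h.symm
    obtain ⟨n, hn⟩ := exists_pow_lt_of_lt_one (by positivity : (0:ℝ) < dist y x / 2)
      (by norm_num : (2:ℝ)⁻¹ < 1)
    obtain ⟨δ, hδ, hkey⟩ := key n x
    have h0 : ‖F y - F x‖ < δ := by
      rw [hxy, sub_self, norm_zero]
      exact hδ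
    have := hkey y h0
    linarith
  -- inducing
  have hind : IsInducing F := by
    rw [isInducing_iff_nhds]
    intro x
    refine le_antisymm (hF_cont.continuousAt.le_comap) ?_
    intro s hs
    obtain ⟨ε, hε, hball⟩ := Metric.mem_nhds_iff.1 hs
    obtain ⟨n, hn⟩ := exists_pow_lt_of_lt_one (by positivity : (0:ℝ) < ε / 2)
      (by norm_num : (2:ℝ)⁻¹ < 1)
    obtain ⟨δ, hδ, hkey⟩ := key n x
    refine Filter.mem_of_superset
      (Filter.preimage_mem_comap (Metric.ball_mem_nhds _ hδ)) ?_
    intro y hy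
    apply hball
    have h1 : dist (F y) (F x) < δ := Metric.mem_ball.1 hy
    rw [dist_eq_norm] at h1
    have h2 := hkey y h1
    exact Metric.mem_ball.2 (by linarith)
  exact ⟨ℕ × X, F, ⟨hind, hinj⟩, hF_norm⟩

/-- `X` is metrizable iff it embeds into some `l¹(V)` with image in the unit sphere. -/
theorem stmt2 (X : Type) [TopologicalSpace X] [T2Space X] :
    MetrizableSpace X ↔
      ∃ (V : Type) (f : X → lp (fun _ : V => ℝ) 1),
        IsEmbedding f ∧ ∀ x : X, ‖f x‖ = 1 := by
  constructor
  · intro h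
    letI : MetricSpace X := TopologicalSpace.metrizableSpaceMetric X
    exact aux_embed X
  · rintro ⟨V, f, hf, -⟩
    exact hf.metrizableSpace
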